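/- arXiv:2206.05597 — 7 statements merged into one kernel-verified Lean document; each statement's English description precedes it below -/
import Mathlib

section
/- Let P = (U, ≼) be a finite poset and let u, v ∈ U be incomparable in P. Then in the poset P[u→v], the element v covers u; that is, (u,v) is an edge of the Hasse diagram of P[u→v]. -/
/-- The poset `P[u→v]`: the partial order on `U` obtained as the transitive closure of
`≼ ∪ {(u,v)}`, assuming `¬ (v ≼ u)`. Explicitly, `a ≤ b` iff `a ≼ b`, or `a ≼ u` and `v ≼ b`. -/
def extend {U : Type*} (P : PartialOrder U) (u v : U) (h : ¬ P.le v u) : PartialOrder U where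
  le a b := P.le a b ∨ (P.le a u ∧ P.le v b)
  lt a b := (P.le a b ∨ (P.le a u ∧ P.le v b)) ∧ ¬ (P.le b a ∨ (P.le b u ∧ P.le v a))
  lt_iff_le_not_ge _ _ := Iff.rfl
  le_refl a := Or.inl (P.le_refl a)
  le_trans a b c hab hbc := by
    rcases hab with hab | ⟨hau, hvb⟩
    · rcases hbc with hbc | ⟨hbu, hvc⟩
      · exact Or.inl (P.le_trans _ _ _ hab hbc)
      · exact Or.inr ⟨P.le_trans _ _ _ hab hbu, hvc⟩
    · rcases hbc with hbc | ⟨hbu, hvc⟩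
      · exact Or.inr ⟨hau, P.le_trans _ _ _ hvb hbc⟩
      · exact absurd (P.le_trans _ _ _ hvb hbu) h
  le_antisymm a b hab hba := by
    rcases hab with hab | ⟨hau, hvb⟩
    · rcases hba with hba | ⟨hbu, hva⟩
      · exact P.le_antisymm _ _ hab hba
      · exact absurd (P.le_trans _ _ _ hva (P.le_trans _ _ _ hab hbu)) h
    · rcases hba with hba | ⟨hbu, hva⟩
      · exact absurd (P.le_trans _ _ _ hvb (P.le_trans _ _ _ hba hau)) h
      · exact absurd (P.le_trans _ _ _ hvb hbu) h

/-- `Sortable P c`: the poset `P` can be sorted using at most `c` comparisons.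
Either `P` is a linear order, or `c ≥ 1` and there are incomparable `u, v` such that
both outcomes `P[u→v]` and `P[v→u]` of the comparison are sortable in `c - 1` comparisons. -/
inductive Sortable {U : Type*} : PartialOrder U → ℕ → Prop
  | linear {P : PartialOrder U} {c : ℕ} (h : ∀ a b : U, P.le a b ∨ P.le b a) : Sortable P c
  | step {P : PartialOrder U} {c : ℕ} (u v : U) (h1 : ¬ P.le u v) (h2 : ¬ P.le v u)
      (s1 : Sortable (extend P u v h2) c) (s2 : Sortable (extend P v u h1) c) :
      Sortable P (c + 1)

/-- The antichain (trivially ordered poset): distinct elements are incomparable. -/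
def trivialOrder (U : Type*) : PartialOrder U where
  le a b := a = b
  lt _ _ := False
  lt_iff_le_not_ge _ _ := ⟨fun h => h.elim, fun h => (h.2 h.1.symm).elim⟩
  le_refl _ := rfl
  le_trans _ _ _ h1 h2 := Eq.trans h1 h2
  le_antisymm _ _ h1 _ := h1

/-- `S n`: the minimum number of comparisons sufficient to sort `n` elements in the
worst case, i.e. the least `c` such that the antichain on `n` elements is sortable
in `c` comparisons. -/
noncomputable def S (n : ℕ) : ℕ := sInf {c : ℕ | Sortable (trivialOrder (Fin n)) c}

/-- `numExt P` is `e(P)`, the number of linear extensions of `P`, i.e. the number of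
linear orders on `U` extending the order of `P`. -/
noncomputable def numExt {U : Type*} (P : PartialOrder U) : ℕ :=
  Nat.card {L : PartialOrder U //
    (∀ a b : U, L.le a b ∨ L.le b a) ∧ (∀ a b : U, P.le a b → L.le a b)}

/-- The efficiency `E(Q) = |U|! / (2^d · e(Q))` of a poset obtained after `d` comparisons. -/
noncomputable def efficiency {U : Type*} [Fintype U] (d : ℕ) (Q : PartialOrder U) : ℝ :=
  (Nat.factorial (Fintype.card U) : ℝ) / ((2 ^ d : ℝ) * (numExt Q : ℝ))

/-- `covers P a b`: `(a, b)` is an edge of the Hasse diagram of `P`, i.e. `b` covers `a`: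
`a ≺ b` and there is no `w` with `a ≺ w ≺ b`. -/
def covers {U : Type*} (P : PartialOrder U) (a b : U) : Prop :=
  P.lt a b ∧ ∀ w, ¬ (P.lt a w ∧ P.lt w b)

/-- The dual of a poset, obtained by reversing the order relation. -/
def dualOrder {U : Type*} (P : PartialOrder U) : PartialOrder U where
  le a b := P.le b a
  lt a b := P.le b a ∧ ¬ P.le a b
  lt_iff_le_not_ge _ _ := Iff.rfl
  le_refl a := P.le_refl a
  le_trans _ _ _ h1 h2 := P.le_trans _ _ _ h2 h1
  le_antisymm _ _ h1 h2 := P.le_antisymm _ _ h2 h1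

/-- The restriction of a poset to a subset of its underlying set. -/
def restrict {U : Type*} (P : PartialOrder U) (D : Set U) : PartialOrder D where
  le a b := P.le a.1 b.1
  lt a b := P.le a.1 b.1 ∧ ¬ P.le b.1 a.1
  lt_iff_le_not_ge _ _ := Iff.rfl
  le_refl a := P.le_refl a.1
  le_trans _ _ _ h1 h2 := P.le_trans _ _ _ h1 h2
  le_antisymm _ _ h1 h2 := Subtype.ext (P.le_antisymm _ _ h1 h2)

/-- `D` is a down-set (lower set) of `P`. -/
def isDownSet {U : Type*} (P : PartialOrder U) (D : Set U) : Prop :=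
  ∀ ⦃x⦄, x ∈ D → ∀ ⦃y⦄, P.le y x → y ∈ D

/-- `V` is an up-set (upper set) of `P`. -/
def isUpSet {U : Type*} (P : PartialOrder U) (V : Set U) : Prop :=
  ∀ ⦃x⦄, x ∈ V → ∀ ⦃y⦄, P.le x y → y ∈ V

/-- The disjoint union of two posets: elements from different parts are incomparable. -/
def sumOrder {α β : Type*} (P : PartialOrder α) (Q : PartialOrder β) :
    PartialOrder (α ⊕ β) where
  le := Sum.LiftRel P.le Q.le
  lt x y := Sum.LiftRel P.le Q.le x y ∧ ¬ Sum.LiftRel P.le Q.le y x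
  lt_iff_le_not_ge _ _ := Iff.rfl
  le_refl x := by
    cases x with
    | inl a => exact Sum.LiftRel.inl (P.le_refl a)
    | inr b => exact Sum.LiftRel.inr (Q.le_refl b)
  le_trans x y z h1 h2 := by
    cases h1 with
    | inl h1 =>
      cases h2 with
      | inl h2 => exact Sum.LiftRel.inl (P.le_trans _ _ _ h1 h2)
    | inr h1 =>
      cases h2 with
      | inr h2 => exact Sum.LiftRel.inr (Q.le_trans _ _ _ h1 h2)
  le_antisymm x y h1 h2 := by
    cases h1 with
    | inl h1 =>
      cases h2 with
      | inl h2 => exact congrArg Sum.inl (P.le_antisymm _ _ h1 h2)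
    | inr h1 =>
      cases h2 with
      | inr h2 => exact congrArg Sum.inr (Q.le_antisymm _ _ h1 h2)

/-- If `u, v` are incomparable in a finite poset `P`, then `(u, v)` is an edge of the
Hasse diagram of `P[u→v]`, i.e. `v` covers `u` in `P[u→v]`. -/
theorem covers_extend {U : Type*} [Fintype U] (P : PartialOrder U) (u v : U)
    (h1 : ¬ P.le u v) (h2 : ¬ P.le v u) :
    covers (extend P u v h2) u v := by
  constructor
  · exact ⟨Or.inr ⟨P.le_refl u, P.le_refl v⟩,
      fun hvu => hvu.elim h2 (fun ⟨a,_⟩ => h2 a)⟩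
  · rintro w ⟨⟨huw, hwu⟩, ⟨hwv, hvw⟩⟩
    rcases huw with huw | ⟨_, hvw'⟩
    · rcases hwv with hwv | ⟨hwu', _⟩
      · exact h1 (P.le_trans _ _ _ huw hwv)
      · exact hwu (Or.inl hwu')
    · rcases hwv with hwv | ⟨hwu', _⟩
      · exact hvw (Or.inl hvw')
      · exact hwu (Or.inl hwu')
end

section
/- Let P = (U, ≼) be a finite poset and let u, v ∈ U be incomparable in P. Then every edge of the Hasse diagram of P[u→v] other than (u,v) is an edge of the Hasse diagram of P; in particular, the number of edges of the Hasse diagram of P[u→v] is at most the number of edges of the Hasse diagram of P plus 1. -/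
/-- If `u, v` are incomparable in a finite poset `P`, then every edge of the Hasse diagram
of `P[u→v]` other than `(u, v)` is an edge of the Hasse diagram of `P`; in particular, the
number of edges of the Hasse diagram of `P[u→v]` is at most that of `P` plus `1`. -/
theorem hasse_extend {U : Type*} [Fintype U] (P : PartialOrder U) (u v : U)
    (h1 : ¬ P.le u v) (h2 : ¬ P.le v u) :
    (∀ a b : U, covers (extend P u v h2) a b → (a, b) ≠ (u, v) → covers P a b) ∧
    Nat.card {p : U × U // covers (extend P u v h2) p.1 p.2} ≤
      Nat.card {p : U × U // covers P p.1 p.2} + 1 := by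
  
  have hQlt : ∀ a b : U, (extend P u v h2).lt a b ↔
      ((P.le a b ∨ (P.le a u ∧ P.le v b)) ∧ ¬ (P.le b a ∨ (P.le b u ∧ P.le v a))) :=
    fun a b => Iff.rfl
  have hQle : ∀ a b : U, (extend P u v h2).le a b ↔
      (P.le a b ∨ (P.le a u ∧ P.le v b)) := fun a b => Iff.rfl
  have plt : ∀ a b : U, P.lt a b → (extend P u v h2).lt a b := by
    intro a b hab
    rw [P.lt_iff_le_not_ge] at hab
    rw [hQlt]
    refine ⟨Or.inl hab.1, ?_⟩
    rintro (hba | ⟨hbu, hva⟩)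
    · exact hab.2 hba
    · exact h2 (P.le_trans _ _ _ hva (P.le_trans _ _ _ hab.1 hbu))
  have key : ∀ a b : U, covers (extend P u v h2) a b → (a, b) ≠ (u, v) → covers P a b := by
    intro a b ⟨hlt, hmax⟩ hne
    rw [hQlt] at hlt
    obtain ⟨hle, hnle⟩ := hlt
    rcases hle with hab | ⟨hau, hvb⟩
    · constructor
      · rw [P.lt_iff_le_not_ge]
        exact ⟨hab, fun hba => hnle (Or.inl hba)⟩
      · intro w ⟨haw, hwb⟩
        exact hmax w ⟨plt _ _ haw, plt _ _ hwb⟩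
    · exfalso
      have ha : a = u := by
        by_contra hau'
        have hnua : ¬ P.le u a := fun hua => hau' (P.le_antisymm _ _ hau hua)
        refine hmax u ⟨?_, ?_⟩
        · rw [hQlt]
          refine ⟨Or.inl hau, ?_⟩
          rintro (hua | ⟨hua', hva⟩)
          · exact hnua hua
          · exact h2 (P.le_trans _ _ _ hva hau)
        · rw [hQlt]
          refine ⟨Or.inr ⟨P.le_refl u, hvb⟩, ?_⟩
          rintro (hbu | ⟨hbu, _⟩) <;>
            exact h2 (P.le_trans _ _ _ hvb hbu)
      subst ha
      have hb : b = v := by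
        by_contra hbv'
        have hnbv : ¬ P.le b v := fun hbv => hbv' (P.le_antisymm _ _ hbv hvb)
        refine hmax v ⟨?_, ?_⟩
        · rw [hQlt]
          refine ⟨Or.inr ⟨P.le_refl a, P.le_refl v⟩, ?_⟩
          rintro (hva | ⟨_, hvv⟩)
          · exact h2 hva
          · exact h2 hvv
        · rw [hQlt]
          refine ⟨Or.inl hvb, ?_⟩
          rintro (hbv | ⟨hbu, _⟩)
          · exact hnbv hbv
          · exact h2 (P.le_trans _ _ _ hvb hbu)
      exact hne (by rw [hb])
  refine ⟨key, ?_⟩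
  classical
  have hinj : Function.Injective (fun p : {p : U × U // covers (extend P u v h2) p.1 p.2} =>
      if h : p.1 = (u, v) then (Sum.inr Unit.unit : {p : U × U // covers P p.1 p.2} ⊕ Unit)
      else Sum.inl ⟨p.1, key _ _ p.2 h⟩) := by
    intro p q hpq
    by_cases hp : (p : U × U) = (u, v)
    · by_cases hq : (q : U × U) = (u, v)
      · exact Subtype.ext (hp.trans hq.symm)
      · simp [hp, hq] at hpq
    · by_cases hq : (q : U × U) = (u, v)
      · simp [hp, hq] at hpq
      · simp only [hp, hq, dif_neg, not_false_iff, Sum.inl.injEq, Subtype.mk.injEq] at hpq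
        exact Subtype.ext hpq
  calc Nat.card {p : U × U // covers (extend P u v h2) p.1 p.2}
      ≤ Nat.card ({p : U × U // covers P p.1 p.2} ⊕ Unit) :=
        Nat.card_le_card_of_injective _ hinj
    _ = Nat.card {p : U × U // covers P p.1 p.2} + 1 := by
        rw [Nat.card_sum]; simp
end

section
/- Let R be a finite relation on a set U that is a Hasse diagram, let (u,v) ∈ R, let R₁ = R \ {(u,v)}, and let R₂ = R₁ ∪ {(x,v) : (x,u) ∈ R and (x,v) ∉ R₁*} ∪ {(u,y) : (v,y) ∈ R and (u,y) ∉ R₁*}, where S* denotes the reflexive-transitive closure of a relation S. Then R₁ and R₂ are Hasse diagrams. -/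
/-- The reflexive-transitive closure `S*` of a relation on `U` given as a set of pairs. -/
def closRel {U : Type*} (R : Set (U × U)) : U → U → Prop :=
  Relation.ReflTransGen (fun a b => (a, b) ∈ R)

/-- The covering relation of a partial order `le` on `U`: `(a, b)` is a covering pair iff
`a ≺ b` and there is no `w` with `a ≺ w ≺ b` (where `x ≺ y` means `le x y ∧ x ≠ y`). -/
def coverRel {U : Type*} (le : U → U → Prop) (a b : U) : Prop :=
  (le a b ∧ a ≠ b) ∧ ∀ w, ¬ ((le a w ∧ a ≠ w) ∧ (le w b ∧ w ≠ b))

/-- `R` is a Hasse diagram: its reflexive-transitive closure `R*` is a partial order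
(antisymmetric; reflexivity and transitivity are automatic) and `R` equals the covering
relation of `R*` (i.e. `R` is acyclic and transitively reduced). -/
def IsHasseDiagram {U : Type*} (R : Set (U × U)) : Prop :=
  (∀ a b : U, closRel R a b → closRel R b a → a = b) ∧
  (∀ a b : U, (a, b) ∈ R ↔ coverRel (closRel R) a b)

namespace HasseAux

variable {U : Type*}

lemma clos_mono {S T : Set (U × U)} (h : ∀ a b : U, (a, b) ∈ S → closRel T a b) :
    ∀ {a b : U}, closRel S a b → closRel T a b := by
  intro a b hab
  induction hab with
  | refl => exact Relation.ReflTransGen.refl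
  | tail _ hedge ih => exact ih.trans (h _ _ hedge)

lemma mem_of_cover {S : Set (U × U)} (hirr : ∀ a : U, (a, a) ∉ S) {a b : U}
    (h : coverRel (closRel S) a b) : (a, b) ∈ S := by
  obtain ⟨⟨hab, hne⟩, hno⟩ := h
  rcases Relation.ReflTransGen.cases_head hab with heq | ⟨c, hac, hcb⟩
  · exact absurd heq hne
  · rcases eq_or_ne c b with rfl | hcb'
    · exact hac
    · exact absurd ⟨⟨Relation.ReflTransGen.single hac,
        fun h' => hirr c (h' ▸ hac)⟩, hcb, hcb'⟩ (hno c)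

end HasseAux

open HasseAux in
/-- Removing an edge `(u,v)` from a Hasse diagram `R` yields a Hasse diagram `R₁`, and adding
to `R₁` the edges `(x, v)` for `(x, u) ∈ R` with `(x, v) ∉ R₁*` and `(u, y)` for `(v, y) ∈ R`
with `(u, y) ∉ R₁*` yields a Hasse diagram `R₂`. -/
theorem isHasseDiagram_remove_edge {U : Type*} [Fintype U] (R : Set (U × U))
    (hR : IsHasseDiagram R) (u v : U) (huv : (u, v) ∈ R)
    (R₁ R₂ : Set (U × U)) (hR₁ : R₁ = R \ {(u, v)})
    (hR₂ : R₂ = R₁ ∪ {q | ∃ x, q = (x, v) ∧ (x, u) ∈ R ∧ ¬ closRel R₁ x v}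
                   ∪ {q | ∃ y, q = (u, y) ∧ (v, y) ∈ R ∧ ¬ closRel R₁ u y}) :
    IsHasseDiagram R₁ ∧ IsHasseDiagram R₂ := by
  obtain ⟨antisym, covIff⟩ := hR
  have Rne : ∀ {a b : U}, (a, b) ∈ R → a ≠ b := fun h => ((covIff _ _).1 h).1.2
  have huvne : u ≠ v := Rne huv
  have h1sub : ∀ {a b : U}, (a, b) ∈ R₁ → (a, b) ∈ R := by
    intro a b h; rw [hR₁] at h; exact h.1
  have hc1 : ∀ {a b : U}, closRel R₁ a b → closRel R a b :=
    clos_mono (fun a b h => Relation.ReflTransGen.single (h1sub h))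
  have h2cases : ∀ {a b : U}, (a, b) ∈ R₂ →
      (a, b) ∈ R₁ ∨ (b = v ∧ (a, u) ∈ R ∧ ¬ closRel R₁ a v) ∨
      (a = u ∧ (v, b) ∈ R ∧ ¬ closRel R₁ u b) := by
    intro a b h
    rw [hR₂] at h
    simp only [Set.mem_union, Set.mem_setOf_eq] at h
    rcases h with (h | h) | h
    · exact Or.inl h
    · obtain ⟨x, heq, h1, h2⟩ := h
      simp only [Prod.mk.injEq] at heq
      obtain ⟨rfl, rfl⟩ := heq
      exact Or.inr (Or.inl ⟨rfl, h1, h2⟩)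
    · obtain ⟨y, heq, h1, h2⟩ := h
      simp only [Prod.mk.injEq] at heq
      obtain ⟨rfl, rfl⟩ := heq
      exact Or.inr (Or.inr ⟨rfl, h1, h2⟩)
  have hc2 : ∀ {a b : U}, closRel R₂ a b → closRel R a b := by
    refine clos_mono ?_
    intro a b h
    rcases h2cases h with h | ⟨heq, h1, _⟩ | ⟨heq, h1, _⟩ <;> try (replace heq := heq.symm; subst heq)
    · exact Relation.ReflTransGen.single (h1sub h)
    · exact (Relation.ReflTransGen.single h1).tail huv
    · exact (Relation.ReflTransGen.single huv).tail h1
  have R₁irr : ∀ a : U, (a, a) ∉ R₁ := fun a h => Rne (h1sub h) rfl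
  have R₂irr : ∀ a : U, (a, a) ∉ R₂ := by
    intro a h
    rcases h2cases h with h | ⟨heq, h1, _⟩ | ⟨heq, h1, _⟩ <;> try (replace heq := heq.symm; subst heq)
    · exact R₁irr a h
    · exact huvne (antisym u v (Relation.ReflTransGen.single huv)
        (Relation.ReflTransGen.single h1))
    · exact huvne (antisym u v (Relation.ReflTransGen.single huv)
        (Relation.ReflTransGen.single h1))
  have decomp : ∀ {a b : U}, closRel R₂ a b →
      closRel R₁ a b ∨
      (∃ x, closRel R₁ a x ∧ (x, u) ∈ R ∧ ¬ closRel R₁ x v ∧ closRel R₁ v b) ∨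
      (closRel R₁ a u ∧ ∃ y, (v, y) ∈ R ∧ ¬ closRel R₁ u y ∧ closRel R₁ y b) := by
    intro a b hab
    induction hab using Relation.ReflTransGen.head_induction_on with
    | refl => exact Or.inl Relation.ReflTransGen.refl
    | head hedge htail ih =>
      rcases h2cases hedge with he | ⟨heq, hxu, hnxv⟩ | ⟨heq, hvy, hnuy⟩ <;> try (replace heq := heq.symm; subst heq)
      · rcases ih with h | ⟨x, hx1, hx2, hx3, hx4⟩ | ⟨h1, y, hy1, hy2, hy3⟩
        · exact Or.inl (h.head he)
        · exact Or.inr (Or.inl ⟨x, hx1.head he, hx2, hx3, hx4⟩)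
        · exact Or.inr (Or.inr ⟨h1.head he, y, hy1, hy2, hy3⟩)
      · rcases ih with h | ⟨x, hx1, hx2, hx3, hx4⟩ | ⟨h1, y, hy1, hy2, hy3⟩
        · exact Or.inr (Or.inl ⟨_, Relation.ReflTransGen.refl, hxu, hnxv, h⟩)
        · have h' : v = x := antisym v x (hc1 hx1)
            ((Relation.ReflTransGen.single hx2).tail huv)
          rw [← h'] at hx3
          exact absurd Relation.ReflTransGen.refl hx3
        · exact absurd (antisym u v (Relation.ReflTransGen.single huv) (hc1 h1)) huvne
      · rcases ih with h | ⟨x, hx1, hx2, hx3, hx4⟩ | ⟨h1, y, hy1, hy2, hy3⟩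
        · exact Or.inr (Or.inr ⟨Relation.ReflTransGen.refl, _, hvy, hnuy, h⟩)
        · have h2 : u = _ := antisym _ _ ((Relation.ReflTransGen.single huv).tail hvy)
            ((hc1 hx1).tail hx2)
          rw [← h2] at hnuy
          exact absurd Relation.ReflTransGen.refl hnuy
        · have h2 : u = _ := antisym _ _ ((Relation.ReflTransGen.single huv).tail hvy)
            (hc1 h1)
          rw [← h2] at hnuy
          exact absurd Relation.ReflTransGen.refl hnuy
  have hHasse₁ : IsHasseDiagram R₁ := by
    constructor
    · exact fun a b h h' => antisym a b (hc1 h) (hc1 h')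
    · intro a b
      constructor
      · intro h
        refine ⟨⟨Relation.ReflTransGen.single h, Rne (h1sub h)⟩, ?_⟩
        rintro w ⟨⟨h1, h2⟩, h3, h4⟩
        exact ((covIff a b).1 (h1sub h)).2 w ⟨⟨hc1 h1, h2⟩, hc1 h3, h4⟩
      · exact mem_of_cover R₁irr
  have hHasse₂ : IsHasseDiagram R₂ := by
    constructor
    · exact fun a b h h' => antisym a b (hc2 h) (hc2 h')
    · intro a b
      constructor
      · intro h
        have hne : a ≠ b := by
          intro heq
          exact R₂irr b (heq ▸ h)
        refine ⟨⟨Relation.ReflTransGen.single h, hne⟩, ?_⟩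
        rintro w ⟨⟨hxw, hxwne⟩, hwb, hwbne⟩
        rcases h2cases h with he | ⟨heq, hxu, hnxv⟩ | ⟨heq, hvy, hnuy⟩ <;> try (replace heq := heq.symm; subst heq)
        · exact ((covIff a b).1 (h1sub he)).2 w ⟨⟨hc2 hxw, hxwne⟩, hc2 hwb, hwbne⟩
        · -- b = v, (a,u) ∈ R, ¬ a ≤₁ v
          rcases decomp hwb with hA | ⟨x', hwx', hx'u, hnx'v, _⟩ | ⟨hwu, y, hvy, hnuy, hyv⟩
          · rcases decomp hxw with hB | ⟨x'', _, _, _, hvw⟩ | ⟨_, y, hvy, _, hyw⟩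
            · exact hnxv (hB.trans hA)
            · exact hwbne (antisym w v (hc1 hA) (hc1 hvw))
            · exact Rne hvy (antisym v y (Relation.ReflTransGen.single hvy)
                (hc1 (hyw.trans hA)))
          · rcases decomp hxw with hB | ⟨x'', _, hx''u, _, hvw⟩ | ⟨_, y, hvy, hnuy2, hyw⟩
            · have hwu' : closRel R w u := (hc1 hwx').tail hx'u
              have hwne : w ≠ u := by
                intro h0
                rw [h0] at hwx'
                exact Rne hx'u (antisym x' u (Relation.ReflTransGen.single hx'u) (hc1 hwx'))
              exact ((covIff a u).1 hxu).2 w ⟨⟨hc1 hB, hxwne⟩, hwu', hwne⟩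
            · exact huvne (antisym u v (Relation.ReflTransGen.single huv)
                ((hc1 (hvw.trans hwx')).tail hx'u))
            · have h2 : u = y := antisym u y ((Relation.ReflTransGen.single huv).tail hvy)
                ((hc1 (hyw.trans hwx')).tail hx'u)
              rw [← h2] at hnuy2
              exact hnuy2 Relation.ReflTransGen.refl
          · exact Rne hvy (antisym v y (Relation.ReflTransGen.single hvy) (hc1 hyv))
        · -- a = u, (v,b) ∈ R, ¬ u ≤₁ b
          rcases decomp hxw with hB | ⟨x', hux', hx'u, _, _⟩ | ⟨_, y', hvy', hnuy', hy'w⟩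
          · rcases decomp hwb with hA | ⟨x', hwx', hx'u, _, _⟩ | ⟨hwu, _, _, _, _⟩
            · exact hnuy (hB.trans hA)
            · exact hxwne (antisym u w (hc1 hB) ((hc1 hwx').tail hx'u))
            · exact hxwne (antisym u w (hc1 hB) (hc1 hwu))
          · exact Rne hx'u (antisym x' u (Relation.ReflTransGen.single hx'u) (hc1 hux'))
          · rcases decomp hwb with hA | ⟨x', hwx', hx'u, _, _⟩ | ⟨hwu, _, _, _, _⟩
            · have hy'b : y' ≠ b := by
                rintro rfl
                exact hwbne (antisym w y' (hc1 hA) (hc1 hy'w))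
              exact ((covIff v b).1 hvy).2 y' ⟨⟨Relation.ReflTransGen.single hvy', Rne hvy'⟩,
                hc1 (hy'w.trans hA), hy'b⟩
            · have h2 : u = y' := antisym u y'
                ((Relation.ReflTransGen.single huv).tail hvy')
                ((hc1 (hy'w.trans hwx')).tail hx'u)
              rw [← h2] at hnuy'
              exact hnuy' Relation.ReflTransGen.refl
            · have h2 : u = y' := antisym u y'
                ((Relation.ReflTransGen.single huv).tail hvy')
                (hc1 (hy'w.trans hwu))
              rw [← h2] at hnuy'
              exact hnuy' Relation.ReflTransGen.refl
      · exact mem_of_cover R₂irr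
  exact ⟨hHasse₁, hHasse₂⟩
end

section
/- Let R be a finite relation on a set U that is a Hasse diagram, let (u,v) ∈ R, let R₁ = R \ {(u,v)}, and let R₂ = R₁ ∪ {(x,v) : (x,u) ∈ R and (x,v) ∉ R₁*} ∪ {(u,y) : (v,y) ∈ R and (u,y) ∉ R₁*}, where S* denotes the reflexive-transitive closure of a relation S. Then R₂* = R* \ {(u,v)}. -/
/-- With `R`, `u`, `v`, `R₁`, `R₂` as in the edge-removal construction, the
reflexive-transitive closure of `R₂` equals `R* \\ {(u, v)}`. -/
theorem closure_remove_edge {U : Type*} [Fintype U] (R : Set (U × U))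
    (hR : IsHasseDiagram R) (u v : U) (huv : (u, v) ∈ R)
    (R₁ R₂ : Set (U × U)) (hR₁ : R₁ = R \ {(u, v)})
    (hR₂ : R₂ = R₁ ∪ {q | ∃ x, q = (x, v) ∧ (x, u) ∈ R ∧ ¬ closRel R₁ x v}
                   ∪ {q | ∃ y, q = (u, y) ∧ (v, y) ∈ R ∧ ¬ closRel R₁ u y}) :
    {p : U × U | closRel R₂ p.1 p.2} = {p : U × U | closRel R p.1 p.2} \ {(u, v)} := by
  obtain ⟨hanti, hcov⟩ := hR
  have hne : ∀ {a b : U}, (a, b) ∈ R → a ≠ b := fun h => ((hcov _ _).1 h).1.2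
  have hnomid : ∀ {a b : U}, (a, b) ∈ R →
      ∀ w, ¬ ((closRel R a w ∧ a ≠ w) ∧ (closRel R w b ∧ w ≠ b)) :=
    fun h => ((hcov _ _).1 h).2
  have hR1R : R₁ ⊆ R := by rw [hR₁]; exact Set.diff_subset
  have h1mono : ∀ {a b}, closRel R₁ a b → closRel R a b :=
    fun h => Relation.ReflTransGen.mono (fun a b hab => hR1R hab) _ _ h
  have hR1sub2 : R₁ ⊆ R₂ := by rw [hR₂]; intro q hq; exact Or.inl (Or.inl hq)
  have h1to2 : ∀ {a b}, closRel R₁ a b → closRel R₂ a b :=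
    fun h => Relation.ReflTransGen.mono (fun a b hab => hR1sub2 hab) _ _ h
  -- every R₂ edge is in closRel R
  have hR2clos : ∀ {a b}, (a, b) ∈ R₂ → closRel R a b := by
    intro a b hab
    rw [hR₂] at hab
    rcases hab with (h | h) | h
    · exact Relation.ReflTransGen.single (hR1R h)
    · obtain ⟨x, hx, hxu, -⟩ := h
      rw [Prod.ext_iff] at hx
      obtain ⟨h1, h2⟩ := hx
      subst h1; subst h2
      exact (Relation.ReflTransGen.single hxu).trans (Relation.ReflTransGen.single huv)
    · obtain ⟨y, hy, hvy, -⟩ := h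
      rw [Prod.ext_iff] at hy
      obtain ⟨h1, h2⟩ := hy
      subst h1; subst h2
      exact (Relation.ReflTransGen.single huv).trans (Relation.ReflTransGen.single hvy)
  have h2mono : ∀ {a b}, closRel R₂ a b → closRel R a b := by
    intro a b h
    induction h with
    | refl => exact Relation.ReflTransGen.refl
    | tail _ h2 ih => exact ih.trans (hR2clos h2)
  -- (u, v) is not in closRel R₂
  have hnotuv : ¬ closRel R₂ u v := by
    intro h
    have huvne : u ≠ v := hne huv
    rcases Relation.ReflTransGen.cases_head h with h0 | ⟨w, hw, hwv⟩
    · exact huvne h0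
    · have hwvR : closRel R w v := h2mono hwv
      rw [hR₂] at hw
      rcases hw with (h | h) | h
      · have hwR : (u, w) ∈ R := hR1R h
        have hwnev : w ≠ v := by
          intro e
          rw [hR₁] at h
          exact h.2 (by rw [e]; rfl)
        exact hnomid huv w ⟨⟨Relation.ReflTransGen.single hwR, hne hwR⟩, hwvR, hwnev⟩
      · obtain ⟨x, hx, hxu, -⟩ := h
        rw [Prod.ext_iff] at hx
        obtain ⟨h1, -⟩ := hx
        subst h1
        exact hne hxu rfl
      · obtain ⟨y, hy, hvy, -⟩ := h
        rw [Prod.ext_iff] at hy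
        obtain ⟨-, h2⟩ := hy
        subst h2
        exact hne hvy (hanti v w (Relation.ReflTransGen.single hvy) hwvR)
  -- splitting an R-chain at the edge (u, v)
  have hsplit : ∀ {a b}, closRel R a b →
      closRel R₁ a b ∨ (closRel R₁ a u ∧ closRel R₁ v b) := by
    intro a b h
    induction h with
    | refl => exact Or.inl Relation.ReflTransGen.refl
    | @tail b c _ hbc ih =>
      by_cases hbc' : (b, c) = (u, v)
      · rw [Prod.ext_iff] at hbc'
        obtain ⟨h1, h2⟩ := hbc'
        subst h1; subst h2
        rcases ih with h1 | ⟨h1, -⟩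
        · exact Or.inr ⟨h1, Relation.ReflTransGen.refl⟩
        · exact Or.inr ⟨h1, Relation.ReflTransGen.refl⟩
      · have hmem : (b, c) ∈ R₁ := by rw [hR₁]; exact ⟨hbc, hbc'⟩
        rcases ih with h1 | ⟨h1, h2⟩
        · exact Or.inl (h1.tail hmem)
        · exact Or.inr ⟨h1, h2.tail hmem⟩
  -- the bridging edges
  have hxv : ∀ {x}, (x, u) ∈ R → closRel R₂ x v := by
    intro x hx
    by_cases h : closRel R₁ x v
    · exact h1to2 h
    · exact Relation.ReflTransGen.single
        (by rw [hR₂]; exact Or.inl (Or.inr ⟨x, rfl, hx, h⟩))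
  have huy : ∀ {y}, (v, y) ∈ R → closRel R₂ u y := by
    intro y hy
    by_cases h : closRel R₁ u y
    · exact h1to2 h
    · exact Relation.ReflTransGen.single
        (by rw [hR₂]; exact Or.inr ⟨y, rfl, hy, h⟩)
  ext ⟨a, b⟩
  simp only [Set.mem_setOf_eq, Set.mem_diff, Set.mem_singleton_iff]
  constructor
  · intro h
    refine ⟨h2mono h, ?_⟩
    intro e
    rw [Prod.ext_iff] at e
    obtain ⟨h1, h2⟩ := e
    subst h1; subst h2
    exact hnotuv h
  · rintro ⟨h, hne'⟩
    rcases hsplit h with h1 | ⟨hau, hvb⟩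
    · exact h1to2 h1
    · by_cases hau' : a = u
      · subst hau'
        by_cases hbv : b = v
        · subst hbv; exact absurd rfl hne'
        · rcases Relation.ReflTransGen.cases_head hvb with h0 | ⟨y, hy, hyb⟩
          · exact absurd h0.symm hbv
          · exact (huy (hR1R hy)).trans (h1to2 hyb)
      · rcases Relation.ReflTransGen.cases_tail hau with h0 | ⟨x, hax, hxu⟩
        · exact absurd h0.symm hau'
        · exact ((h1to2 hax).trans (hxv (hR1R hxu))).trans (h1to2 hvb)
end

section
/- Let R be a finite relation on a set U that is a Hasse diagram, let (u,v) ∈ R, and let R₁ = R \ {(u,v)}, where S* denotes the reflexive-transitive closure of a relation S. Then for every relation Q on U that is a Hasse diagram, one has (Q ∪ {(u,v)})* = R* if and only if R₁* ⊆ Q* ⊆ R*. -/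
lemma clos_mono {U : Type*} {S T : Set (U × U)}
    (h : ∀ a b : U, (a, b) ∈ S → closRel T a b) :
    ∀ a b : U, closRel S a b → closRel T a b := by
  intro a b hab
  induction hab with
  | refl => exact Relation.ReflTransGen.refl
  | tail _ hstep ih => exact ih.trans (h _ _ hstep)

/-- Let `R` be a Hasse diagram, `(u, v) ∈ R` and `R₁ = R \\ {(u, v)}`. Then for every Hasse
diagram `Q` one has `(Q ∪ {(u,v)})* = R*` if and only if `R₁* ⊆ Q* ⊆ R*`. -/
theorem closure_insert_eq_iff {U : Type*} [Fintype U] (R : Set (U × U))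
    (hR : IsHasseDiagram R) (u v : U) (huv : (u, v) ∈ R)
    (R₁ : Set (U × U)) (hR₁ : R₁ = R \ {(u, v)})
    (Q : Set (U × U)) (hQ : IsHasseDiagram Q) :
    {p : U × U | closRel (Q ∪ {(u, v)}) p.1 p.2} = {p : U × U | closRel R p.1 p.2} ↔
      {p : U × U | closRel R₁ p.1 p.2} ⊆ {p : U × U | closRel Q p.1 p.2} ∧
      {p : U × U | closRel Q p.1 p.2} ⊆ {p : U × U | closRel R p.1 p.2} := by
  constructor
  · intro heq
    have hiff : ∀ a b : U, closRel (Q ∪ {(u, v)}) a b ↔ closRel R a b := fun a b =>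
      Set.ext_iff.1 heq (a, b)
    have hQR : ∀ a b : U, closRel Q a b → closRel R a b := fun a b h =>
      (hiff a b).1 (clos_mono (fun x y hxy => Relation.ReflTransGen.single (Or.inl hxy)) a b h)
    refine ⟨?_, fun p hp => hQR p.1 p.2 hp⟩
    intro p hp
    refine clos_mono ?_ p.1 p.2 hp
    intro a b hab
    rw [hR₁] at hab
    obtain ⟨habR, habne⟩ := hab
    have hcov := (hR.2 a b).1 habR
    have h1 : closRel (Q ∪ {(u, v)}) a b := (hiff a b).2 (Relation.ReflTransGen.single habR)
    have key : (a, b) ∈ Q ∪ {(u, v)} := by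
      rcases Relation.ReflTransGen.cases_head h1 with h | ⟨c, hac, hcb⟩
      · exact absurd h hcov.1.2
      · have hacR : closRel R a c := by
          rcases hac with h | h
          · exact hQR a c (Relation.ReflTransGen.single h)
          · rw [Set.mem_singleton_iff, Prod.mk.injEq] at h
            rw [h.1, h.2]
            exact Relation.ReflTransGen.single huv
        have hacne : a ≠ c := by
          rcases hac with h | h
          · exact ((hQ.2 a c).1 h).1.2
          · rw [Set.mem_singleton_iff, Prod.mk.injEq] at h
            rw [h.1, h.2]
            exact ((hR.2 u v).1 huv).1.2
        have hcbR : closRel R c b := by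
          refine (hiff c b).1 ?_
          exact hcb
        by_cases hcb' : c = b
        · subst hcb'; exact hac
        · exact absurd ⟨⟨hacR, hacne⟩, ⟨hcbR, hcb'⟩⟩ (hcov.2 c)
    rcases key with h | h
    · exact Relation.ReflTransGen.single h
    · exact absurd h habne
  · rintro ⟨h1, h2⟩
    ext p
    constructor
    · intro hp
      refine clos_mono ?_ p.1 p.2 hp
      intro a b hab
      rcases hab with h | h
      · exact h2 (show (a, b) ∈ {p : U × U | closRel Q p.1 p.2} from
          Relation.ReflTransGen.single h)
      · rw [Set.mem_singleton_iff, Prod.mk.injEq] at h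
        rw [h.1, h.2]
        exact Relation.ReflTransGen.single huv
    · intro hp
      refine clos_mono ?_ p.1 p.2 hp
      intro a b hab
      by_cases h : (a, b) = (u, v)
      · exact Relation.ReflTransGen.single (Or.inr h)
      · have : (a, b) ∈ R₁ := by rw [hR₁]; exact ⟨hab, h⟩
        have hq : closRel Q a b := h1 (show (a, b) ∈ {p : U × U | closRel R₁ p.1 p.2} from
          Relation.ReflTransGen.single this)
        exact clos_mono (fun x y hxy => Relation.ReflTransGen.single (Or.inl hxy)) a b hq
end

section
/- Let (U, ≼) be a finite partial order and let M ⊆ ≼ be a perfect matching on U; that is, U is partitioned into two-element blocks {u,v} with (u,v) ∈ M and u ≼ v, where each element of U lies in exactly one pair of M and distinct pairs of M are disjoint. Then the number of down-sets of (U, ≼) is at most √3^{|U|} = 3^{|U|/2}. -/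
/-- If a finite poset `(U, ≼)` admits a perfect matching `M ⊆ ≼` (every element of `U` lies
in exactly one pair of `M`, and each pair consists of two distinct comparable elements), then
the number of down-sets of `(U, ≼)` is at most `√3 ^ |U|`. -/
theorem card_downSets_le_of_perfect_matching {U : Type*} [Fintype U] (P : PartialOrder U)
    (M : Set (U × U)) (hM : ∀ p ∈ M, P.le p.1 p.2 ∧ p.1 ≠ p.2)
    (hperfect : ∀ w : U, ∃! p, p ∈ M ∧ (w = p.1 ∨ w = p.2)) :
    (Nat.card {D : Set U // isDownSet P D} : ℝ) ≤ Real.sqrt 3 ^ Fintype.card U := by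

  classical
  haveI : Finite ↥M := Set.toFinite M
  choose pw hpw huniq using hperfect
  -- |U| = 2 * |M|
  have hne : ∀ p ∈ M, p.1 ≠ p.2 := fun p hp => (hM p hp).2
  have hf_bij : Function.Bijective
      (fun w : U => ((⟨pw w, (hpw w).1⟩ : ↥M), decide (w = (pw w).1))) := by
    constructor
    · intro a b hab
      simp only [Prod.mk.injEq, Subtype.mk.injEq] at hab
      obtain ⟨h1, h2⟩ := hab
      rcases (hpw a).2 with ha | ha <;> rcases (hpw b).2 with hb | hb
      · exact ha.trans (h1 ▸ hb.symm)
      · exfalso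
        have hda : (decide (a = (pw a).1) : Bool) = true := decide_eq_true ha
        rw [hda] at h2
        have hb1 : b = (pw b).1 := of_decide_eq_true h2.symm
        exact hne (pw b) (hpw b).1 (hb1.symm.trans hb)
      · exfalso
        have hdb : (decide (b = (pw b).1) : Bool) = true := decide_eq_true hb
        rw [hdb] at h2
        have ha1 : a = (pw a).1 := of_decide_eq_true h2
        exact hne (pw a) (hpw a).1 (ha1.symm.trans ha)
      · exact ha.trans (h1 ▸ hb.symm)
    · rintro ⟨⟨p, hp⟩, b⟩
      cases b with
      | true =>
        refine ⟨p.1, ?_⟩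
        have hpp : pw p.1 = p := (huniq p.1 p ⟨hp, Or.inl rfl⟩).symm
        exact Prod.ext (Subtype.ext hpp) (by simp [hpp])
      | false =>
        refine ⟨p.2, ?_⟩
        have hpp : pw p.2 = p := (huniq p.2 p ⟨hp, Or.inr rfl⟩).symm
        refine Prod.ext (Subtype.ext hpp) ?_
        simp only [hpp]
        exact decide_eq_false (fun h => hne p hp h.symm)
  have hcardU : Fintype.card U = 2 * Nat.card ↥M := by
    have := Nat.card_eq_of_bijective _ hf_bij
    rw [Nat.card_eq_fintype_card] at this
    rw [this, Nat.card_prod, Nat.card_eq_fintype_card (α := Bool)]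
    simp [mul_comm]
  -- injection into M → Fin 3
  set g : {D : Set U // isDownSet P D} → (↥M → Fin 3) := fun D p =>
    if p.1.2 ∈ D.1 then 2 else if p.1.1 ∈ D.1 then 1 else 0 with hg
  have key : ∀ (D : {D : Set U // isDownSet P D}) (p : U × U) (hp : p ∈ M),
      (p.1 ∈ D.1 ↔ g D ⟨p, hp⟩ ≠ 0) ∧ (p.2 ∈ D.1 ↔ g D ⟨p, hp⟩ = 2) := by
    intro D p hp
    simp only [hg]
    by_cases h2 : p.2 ∈ D.1
    · have h1 : p.1 ∈ D.1 := D.2 h2 (hM p hp).1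
      simp [h1, h2]
    · by_cases h1 : p.1 ∈ D.1 <;> simp [h1, h2]
  have hg_inj : Function.Injective g := by
    intro D E hDE
    ext w
    have hmem : pw w ∈ M := (hpw w).1
    have hval : g D ⟨pw w, hmem⟩ = g E ⟨pw w, hmem⟩ := congrFun hDE _
    rcases (hpw w).2 with hw | hw
    · rw [hw] at *
      constructor
      · intro h; exact (key E _ hmem).1.2 (hval ▸ (key D _ hmem).1.1 h)
      · intro h; exact (key D _ hmem).1.2 (hval ▸ (key E _ hmem).1.1 h)
    · rw [hw] at *
      constructor
      · intro h; exact (key E _ hmem).2.2 (hval ▸ (key D _ hmem).2.1 h)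
      · intro h; exact (key D _ hmem).2.2 (hval ▸ (key E _ hmem).2.1 h)
  have hcard : Nat.card {D : Set U // isDownSet P D} ≤ 3 ^ Nat.card ↥M := by
    calc Nat.card {D : Set U // isDownSet P D} ≤ Nat.card (↥M → Fin 3) :=
          Nat.card_le_card_of_injective g hg_inj
      _ = 3 ^ Nat.card ↥M := by
          rw [Nat.card_fun]
          simp
  have hsqrt : Real.sqrt 3 ^ Fintype.card U = (3 : ℝ) ^ Nat.card ↥M := by
    rw [hcardU, pow_mul, Real.sq_sqrt (by norm_num : (3:ℝ) ≥ 0)]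
  rw [hsqrt]
  calc (Nat.card {D : Set U // isDownSet P D} : ℝ) ≤ ((3 ^ Nat.card ↥M : ℕ) : ℝ) := by
        exact_mod_cast hcard
    _ = (3 : ℝ) ^ Nat.card ↥M := by push_cast; ring
end

section
/- Let P = (U, ≼) be a finite poset and let u, v ∈ U be distinct with ¬(v ≼ u). Let DU(u,v) be the set of pairs (D, V) where D is a down-set of P, V is an up-set of P, v ∈ V, D ∩ V = ∅, and U \ (D ∪ V) = {u}. Then e(P[u→v]) = Σ_{(D,V) ∈ DU(u,v)} e(P restricted to D) · e(P restricted to V). -/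
namespace NumExtAux

variable {U : Type*}

/-- The type of linear extensions of a poset. -/
def ExtT {W : Type*} (Q : PartialOrder W) : Type _ :=
  {L : PartialOrder W // (∀ a b : W, L.le a b ∨ L.le b a) ∧ (∀ a b : W, Q.le a b → L.le a b)}

theorem numExt_eq_card {W : Type*} (Q : PartialOrder W) : numExt Q = Nat.card (ExtT Q) := rfl

instance poFinite {W : Type*} [Finite W] : Finite (PartialOrder W) := by
  have : Finite (W → W → Prop) := by infer_instance
  exact Finite.of_injective (fun P : PartialOrder W => P.le) fun P Q hpq =>
    PartialOrder.ext fun a b => iff_of_eq (congrFun (congrFun hpq a) b)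

instance extTFinite {W : Type*} [Finite W] (Q : PartialOrder W) : Finite (ExtT Q) :=
  Subtype.finite

/-- The glued relation: everything in `D` (ordered by `L1`), then the unique element
outside `D ∪ V`, then everything in `V` (ordered by `L2`). -/
def grel {D V : Set U} (L1 : PartialOrder D) (L2 : PartialOrder V) (a b : U) : Prop :=
  a = b ∨ (∃ (ha : a ∈ D) (hb : b ∈ D), L1.le ⟨a, ha⟩ ⟨b, hb⟩) ∨
    (∃ (ha : a ∈ V) (hb : b ∈ V), L2.le ⟨a, ha⟩ ⟨b, hb⟩) ∨
    (a ∈ D ∧ b ∉ D) ∨ (a ∉ V ∧ b ∈ V)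

section Glue

variable {D V : Set U} {L1 : PartialOrder D} {L2 : PartialOrder V} {u v : U}

theorem disj_aux (hdisj : D ∩ V = ∅) {x : U} (hx : x ∈ D) (hx' : x ∈ V) : False := by
  have : x ∈ D ∩ V := ⟨hx, hx'⟩
  rw [hdisj] at this
  exact this

theorem notle1 (hdisj : D ∩ V = ∅) {a b : U} (hb : b ∈ D) (ha : a ∉ D) :
    ¬ grel L1 L2 a b := by
  rintro (rfl | ⟨ha', _, _⟩ | ⟨_, hb', _⟩ | ⟨ha', _⟩ | ⟨_, hb'⟩)
  · exact ha hb
  · exact ha ha'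
  · exact disj_aux hdisj hb hb'
  · exact ha ha'
  · exact disj_aux hdisj hb hb'

theorem notle2 (hdisj : D ∩ V = ∅) {a b : U} (ha : a ∈ V) (hb : b ∉ V) :
    ¬ grel L1 L2 a b := by
  rintro (rfl | ⟨ha', _, _⟩ | ⟨_, hb', _⟩ | ⟨ha', _⟩ | ⟨han, _⟩)
  · exact hb ha
  · exact disj_aux hdisj ha' ha
  · exact hb hb'
  · exact disj_aux hdisj ha' ha
  · exact han ha

theorem grel_DD (hdisj : D ∩ V = ∅) {a b : U} (ha : a ∈ D) (hb : b ∈ D)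
    (hab : grel L1 L2 a b) : L1.le ⟨a, ha⟩ ⟨b, hb⟩ := by
  rcases hab with rfl | ⟨ha', hb', hle⟩ | ⟨ha', _, _⟩ | ⟨_, hbn⟩ | ⟨_, hb'⟩
  · exact L1.le_refl _
  · exact hle
  · exact (disj_aux hdisj ha ha').elim
  · exact (hbn hb).elim
  · exact (disj_aux hdisj hb hb').elim

theorem grel_VV (hdisj : D ∩ V = ∅) {a b : U} (ha : a ∈ V) (hb : b ∈ V)
    (hab : grel L1 L2 a b) : L2.le ⟨a, ha⟩ ⟨b, hb⟩ := by
  rcases hab with rfl | ⟨ha', _, _⟩ | ⟨ha', hb', hle⟩ | ⟨ha', _⟩ | ⟨han, _⟩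
  · exact L2.le_refl _
  · exact (disj_aux hdisj ha' ha).elim
  · exact hle
  · exact (disj_aux hdisj ha' ha).elim
  · exact (han ha).elim

/-- Gluing two linear orders on `D` and `V` into a partial order on `U`. -/
def glue (L1 : PartialOrder D) (L2 : PartialOrder V) (hdisj : D ∩ V = ∅) :
    PartialOrder U where
  le := grel L1 L2
  lt a b := grel L1 L2 a b ∧ ¬ grel L1 L2 b a
  lt_iff_le_not_ge _ _ := Iff.rfl
  le_refl a := Or.inl rfl
  le_trans a b c hab hbc := by
    classical
    rcases hab with rfl | ⟨ha, hb, hle⟩ | ⟨ha, hb, hle⟩ | ⟨haD, hbD⟩ | ⟨haV, hbV⟩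
    · exact hbc
    · by_cases hc : c ∈ D
      · exact Or.inr (Or.inl ⟨ha, hc, L1.le_trans _ _ _ hle (grel_DD hdisj hb hc hbc)⟩)
      · exact Or.inr (Or.inr (Or.inr (Or.inl ⟨ha, hc⟩)))
    · by_cases hc : c ∈ V
      · exact Or.inr (Or.inr (Or.inl ⟨ha, hc, L2.le_trans _ _ _ hle (grel_VV hdisj hb hc hbc)⟩))
      · exact absurd hbc (notle2 hdisj hb hc)
    · by_cases hc : c ∈ D
      · exact absurd hbc (notle1 hdisj hc hbD)
      · exact Or.inr (Or.inr (Or.inr (Or.inl ⟨haD, hc⟩)))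
    · by_cases hc : c ∈ V
      · exact Or.inr (Or.inr (Or.inr (Or.inr ⟨haV, hc⟩)))
      · exact absurd hbc (notle2 hdisj hbV hc)
  le_antisymm a b hab hba := by
    rcases hab with rfl | ⟨ha, hb, hle⟩ | ⟨ha, hb, hle⟩ | ⟨haD, hbD⟩ | ⟨haV, hbV⟩
    · rfl
    · exact congrArg Subtype.val (L1.le_antisymm ⟨a, ha⟩ ⟨b, hb⟩ hle (grel_DD hdisj hb ha hba))
    · exact congrArg Subtype.val (L2.le_antisymm ⟨a, ha⟩ ⟨b, hb⟩ hle (grel_VV hdisj hb ha hba))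
    · exact absurd hba (notle1 hdisj haD hbD)
    · exact absurd hba (notle2 hdisj hbV haV)

theorem tri (hcomp : Set.univ \ (D ∪ V) = {u}) (x : U) : x ∈ D ∨ x = u ∨ x ∈ V := by
  by_cases hx : x ∈ D
  · exact Or.inl hx
  by_cases hx' : x ∈ V
  · exact Or.inr (Or.inr hx')
  refine Or.inr (Or.inl ?_)
  have hm : x ∈ Set.univ \ (D ∪ V) := by
    refine ⟨trivial, ?_⟩
    rintro (hh | hh)
    exacts [hx hh, hx' hh]
  rw [hcomp] at hm
  exact hm

theorem u_notmem (hcomp : Set.univ \ (D ∪ V) = {u}) : u ∉ D ∧ u ∉ V := by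
  have hm : u ∈ Set.univ \ (D ∪ V) := by rw [hcomp]; exact rfl
  exact ⟨fun hh => hm.2 (Or.inl hh), fun hh => hm.2 (Or.inr hh)⟩

theorem glue_total (h1 : ∀ a b, L1.le a b ∨ L1.le b a) (h2 : ∀ a b, L2.le a b ∨ L2.le b a)
    (hcomp : Set.univ \ (D ∪ V) = {u}) :
    ∀ a b, grel L1 L2 a b ∨ grel L1 L2 b a := by
  intro a b
  by_cases haD : a ∈ D
  · by_cases hbD : b ∈ D
    · rcases h1 ⟨a, haD⟩ ⟨b, hbD⟩ with hle | hle
      · exact Or.inl (Or.inr (Or.inl ⟨haD, hbD, hle⟩))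
      · exact Or.inr (Or.inr (Or.inl ⟨hbD, haD, hle⟩))
    · exact Or.inl (Or.inr (Or.inr (Or.inr (Or.inl ⟨haD, hbD⟩))))
  · by_cases hbD : b ∈ D
    · exact Or.inr (Or.inr (Or.inr (Or.inr (Or.inl ⟨hbD, haD⟩))))
    · by_cases haV : a ∈ V
      · by_cases hbV : b ∈ V
        · rcases h2 ⟨a, haV⟩ ⟨b, hbV⟩ with hle | hle
          · exact Or.inl (Or.inr (Or.inr (Or.inl ⟨haV, hbV, hle⟩)))
          · exact Or.inr (Or.inr (Or.inr (Or.inl ⟨hbV, haV, hle⟩)))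
        · exact Or.inr (Or.inr (Or.inr (Or.inr (Or.inr ⟨hbV, haV⟩))))
      · by_cases hbV : b ∈ V
        · exact Or.inl (Or.inr (Or.inr (Or.inr (Or.inr ⟨haV, hbV⟩))))
        · have hau : a = u := ((tri hcomp a).resolve_left haD).resolve_right haV
          have hbu : b = u := ((tri hcomp b).resolve_left hbD).resolve_right hbV
          exact Or.inl (Or.inl (hau.trans hbu.symm))

theorem glue_ext (P : PartialOrder U) (h : ¬ P.le v u)
    (hD : isDownSet P D) (hV : isUpSet P V) (hvV : v ∈ V)
    (hdisj : D ∩ V = ∅) (hcomp : Set.univ \ (D ∪ V) = {u})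
    (e1 : ∀ a b, (restrict P D).le a b → L1.le a b)
    (e2 : ∀ a b, (restrict P V).le a b → L2.le a b) :
    ∀ a b, (extend P u v h).le a b → grel L1 L2 a b := by
  intro a b hab
  have huV : u ∉ V := (u_notmem hcomp).2
  rcases hab with hab | ⟨hau, hvb⟩
  · by_cases haD : a ∈ D
    · by_cases hbD : b ∈ D
      · exact Or.inr (Or.inl ⟨haD, hbD, e1 ⟨a, haD⟩ ⟨b, hbD⟩ hab⟩)
      · exact Or.inr (Or.inr (Or.inr (Or.inl ⟨haD, hbD⟩)))
    · have hbD : b ∉ D := fun hbD => haD (hD hbD hab)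
      by_cases haV : a ∈ V
      · exact Or.inr (Or.inr (Or.inl ⟨haV, hV haV hab, e2 ⟨a, haV⟩ ⟨b, hV haV hab⟩ hab⟩))
      · by_cases hbV : b ∈ V
        · exact Or.inr (Or.inr (Or.inr (Or.inr ⟨haV, hbV⟩)))
        · have hau : a = u := ((tri hcomp a).resolve_left haD).resolve_right haV
          have hbu : b = u := ((tri hcomp b).resolve_left hbD).resolve_right hbV
          exact Or.inl (hau.trans hbu.symm)
  · have hbV : b ∈ V := hV hvV hvb
    have haV : a ∉ V := fun haV' => huV (hV haV' hau)
    exact Or.inr (Or.inr (Or.inr (Or.inr ⟨haV, hbV⟩)))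

theorem glue_D (hdisj : D ∩ V = ∅) (hcomp : Set.univ \ (D ∪ V) = {u}) :
    {x | (glue L1 L2 hdisj).lt x u} = D := by
  ext x
  simp only [Set.mem_setOf_eq]
  constructor
  · rintro ⟨hxu, hux⟩
    rcases tri hcomp x with hx | hxu' | hx
    · exact hx
    · exact absurd (Or.inl hxu'.symm) hux
    · exact absurd hxu (notle2 hdisj hx (u_notmem hcomp).2)
  · intro hx
    exact ⟨Or.inr (Or.inr (Or.inr (Or.inl ⟨hx, (u_notmem hcomp).1⟩))),
      notle1 hdisj hx (u_notmem hcomp).1⟩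

theorem glue_V (hdisj : D ∩ V = ∅) (hcomp : Set.univ \ (D ∪ V) = {u}) :
    {x | (glue L1 L2 hdisj).lt u x} = V := by
  ext x
  simp only [Set.mem_setOf_eq]
  constructor
  · rintro ⟨hux, hxu⟩
    rcases tri hcomp x with hx | rfl | hx
    · exact absurd hux (notle1 hdisj hx (u_notmem hcomp).1)
    · exact (hxu (Or.inl rfl)).elim
    · exact hx
  · intro hx
    exact ⟨Or.inr (Or.inr (Or.inr (Or.inr ⟨(u_notmem hcomp).2, hx⟩))),
      notle2 hdisj hx (u_notmem hcomp).2⟩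

theorem glue_restrict_D (L1 : PartialOrder D) (L2 : PartialOrder V) (hdisj : D ∩ V = ∅) :
    restrict (glue L1 L2 hdisj) D = L1 := by
  apply PartialOrder.ext
  intro a b
  show grel L1 L2 a.1 b.1 ↔ L1.le a b
  constructor
  · intro hab
    exact grel_DD hdisj a.2 b.2 hab
  · intro hab
    exact Or.inr (Or.inl ⟨a.2, b.2, hab⟩)

theorem glue_restrict_V (L1 : PartialOrder D) (L2 : PartialOrder V) (hdisj : D ∩ V = ∅) :
    restrict (glue L1 L2 hdisj) V = L2 := by
  apply PartialOrder.ext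
  intro a b
  show grel L1 L2 a.1 b.1 ↔ L2.le a b
  constructor
  · intro hab
    exact grel_VV hdisj a.2 b.2 hab
  · intro hab
    exact Or.inr (Or.inr (Or.inl ⟨a.2, b.2, hab⟩))

theorem triL (L : PartialOrder U) (hlin : ∀ a b, L.le a b ∨ L.le b a) (u x : U) :
    L.lt x u ∨ x = u ∨ L.lt u x := by
  rcases hlin x u with hxu | hux
  · by_cases h' : L.le u x
    · exact Or.inr (Or.inl (L.le_antisymm _ _ hxu h'))
    · exact Or.inl ((L.lt_iff_le_not_ge x u).2 ⟨hxu, h'⟩)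
  · by_cases h' : L.le x u
    · exact Or.inr (Or.inl (L.le_antisymm _ _ h' hux))
    · exact Or.inr (Or.inr ((L.lt_iff_le_not_ge u x).2 ⟨hux, h'⟩))

theorem glue_surj_eq (L : PartialOrder U) (hlin : ∀ a b, L.le a b ∨ L.le b a) (u : U)
    (hdisj : {x | L.lt x u} ∩ {x | L.lt u x} = ∅) :
    glue (restrict L {x | L.lt x u}) (restrict L {x | L.lt u x}) hdisj = L := by
  have lt_iff : ∀ x y, L.lt x y ↔ L.le x y ∧ ¬ L.le y x := L.lt_iff_le_not_ge
  apply PartialOrder.ext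
  intro a b
  show grel _ _ a b ↔ L.le a b
  constructor
  · rintro (rfl | ⟨ha, hb, hle⟩ | ⟨ha, hb, hle⟩ | ⟨haD, hbD⟩ | ⟨haV, hbV⟩)
    · exact L.le_refl a
    · exact hle
    · exact hle
    · rcases hlin a b with hh | hh
      · exact hh
      · have h1 := (lt_iff a u).1 haD
        have : L.lt b u := (lt_iff b u).2
          ⟨L.le_trans _ _ _ hh h1.1, fun hub => h1.2 (L.le_trans _ _ _ hub hh)⟩
        exact (hbD this).elim
    · rcases hlin a b with hh | hh
      · exact hh
      · have h1 := (lt_iff u b).1 hbV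
        have : L.lt u a := (lt_iff u a).2
          ⟨L.le_trans _ _ _ h1.1 hh, fun hau => h1.2 (L.le_trans _ _ _ hh hau)⟩
        exact (haV this).elim
  · intro hab
    by_cases hne : a = b
    · exact Or.inl hne
    by_cases haD : L.lt a u
    · by_cases hbD : L.lt b u
      · exact Or.inr (Or.inl ⟨haD, hbD, hab⟩)
      · exact Or.inr (Or.inr (Or.inr (Or.inl ⟨haD, hbD⟩)))
    · by_cases hbV : L.lt u b
      · by_cases haV : L.lt u a
        · exact Or.inr (Or.inr (Or.inl ⟨haV, hbV, hab⟩))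
        · exact Or.inr (Or.inr (Or.inr (Or.inr ⟨haV, hbV⟩)))
      · rcases triL L hlin u a with hh | hau | haV
        · exact (haD hh).elim
        · subst hau
          rcases triL L hlin a b with hbD' | hbu | hh
          · exact (((lt_iff b a).1 hbD').2 hab).elim
          · exact (hne hbu.symm).elim
          · exact (hbV hh).elim
        · rcases triL L hlin u b with hbD' | hbu | hh
          · have h1 := (lt_iff b u).1 hbD'
            have h2 := (lt_iff u a).1 haV
            exact (h1.2 (L.le_trans _ _ _ h2.1 hab)).elim
          · exact (((lt_iff u a).1 haV).2 (hbu ▸ hab)).elim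
          · exact (hbV hh).elim

theorem forward_mem (P : PartialOrder U) (u v : U) (huv : u ≠ v) (h : ¬ P.le v u)
    (L : PartialOrder U) (hlin : ∀ a b, L.le a b ∨ L.le b a)
    (hext : ∀ a b, (extend P u v h).le a b → L.le a b) :
    isDownSet P {x | L.lt x u} ∧ isUpSet P {x | L.lt u x} ∧ v ∈ {x | L.lt u x} ∧
      {x | L.lt x u} ∩ {x | L.lt u x} = ∅ ∧
      Set.univ \ ({x | L.lt x u} ∪ {x | L.lt u x}) = {u} := by
  have lt_iff : ∀ x y, L.lt x y ↔ L.le x y ∧ ¬ L.le y x := L.lt_iff_le_not_ge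
  refine ⟨?_, ?_, ?_, ?_, ?_⟩
  · intro x hx y hyx
    have hyx' : L.le y x := hext _ _ (Or.inl hyx)
    have hx' := (lt_iff x u).1 hx
    show L.lt y u
    exact (lt_iff y u).2 ⟨L.le_trans _ _ _ hyx' hx'.1,
      fun huy => hx'.2 (L.le_trans _ _ _ huy hyx')⟩
  · intro x hx y hxy
    have hxy' : L.le x y := hext _ _ (Or.inl hxy)
    have hx' := (lt_iff u x).1 hx
    show L.lt u y
    exact (lt_iff u y).2 ⟨L.le_trans _ _ _ hx'.1 hxy',
      fun hyu => hx'.2 (L.le_trans _ _ _ hxy' hyu)⟩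
  · have hle : L.le u v := hext _ _ (Or.inr ⟨P.le_refl u, P.le_refl v⟩)
    show L.lt u v
    exact (lt_iff u v).2 ⟨hle, fun hvu => huv (L.le_antisymm _ _ hle hvu)⟩
  · apply Set.eq_empty_iff_forall_notMem.2
    rintro x ⟨h1, h2⟩
    exact ((lt_iff x u).1 h1).2 ((lt_iff u x).1 h2).1
  · ext x
    constructor
    · rintro ⟨-, hn⟩
      have h1 : ¬ L.lt x u := fun hc => hn (Or.inl hc)
      have h2 : ¬ L.lt u x := fun hc => hn (Or.inr hc)
      show x = u
      rcases triL L hlin u x with hh | hh | hh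
      · exact (h1 hh).elim
      · exact hh
      · exact (h2 hh).elim
    · rintro rfl
      refine ⟨trivial, ?_⟩
      rintro (hc | hc) <;>
        exact ((lt_iff _ _).1 hc).2 ((lt_iff _ _).1 hc).1

/-- The index set of the sum. -/
def DUSet (P : PartialOrder U) (u v : U) : Set (Set U × Set U) :=
  {p : Set U × Set U | isDownSet P p.1 ∧ isUpSet P p.2 ∧ v ∈ p.2 ∧
    p.1 ∩ p.2 = ∅ ∧ Set.univ \ (p.1 ∪ p.2) = {u}}

/-- The gluing map. -/
def G (P : PartialOrder U) (u v : U) (h : ¬ P.le v u)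
    (x : Σ p : {p : Set U × Set U // p ∈ DUSet P u v},
      ExtT (restrict P p.1.1) × ExtT (restrict P p.1.2)) :
    ExtT (extend P u v h) :=
  ⟨glue x.2.1.1 x.2.2.1 x.1.2.2.2.2.1,
   glue_total x.2.1.2.1 x.2.2.2.1 x.1.2.2.2.2.2,
   glue_ext P h x.1.2.1 x.1.2.2.1 x.1.2.2.2.1 x.1.2.2.2.2.1 x.1.2.2.2.2.2
     x.2.1.2.2 x.2.2.2.2⟩

theorem G_bijective (P : PartialOrder U) (u v : U) (huv : u ≠ v) (h : ¬ P.le v u) :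
    Function.Bijective (G P u v h) := by
  constructor
  · rintro ⟨⟨⟨D₁, V₁⟩, hp⟩, ⟨L1, hL1⟩, ⟨L2, hL2⟩⟩ ⟨⟨⟨D₂, V₂⟩, hq⟩, ⟨M1, hM1⟩, ⟨M2, hM2⟩⟩ hxy
    dsimp only at L1 hL1 L2 hL2 M1 hM1 M2 hM2
    have hval : glue L1 L2 hp.2.2.2.1 = glue M1 M2 hq.2.2.2.1 :=
      congrArg Subtype.val hxy
    have hDeq : D₁ = D₂ := by
      rw [← glue_D (L1 := L1) (L2 := L2) hp.2.2.2.1 hp.2.2.2.2,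
        ← glue_D (L1 := M1) (L2 := M2) hq.2.2.2.1 hq.2.2.2.2, hval]
    have hVeq : V₁ = V₂ := by
      rw [← glue_V (L1 := L1) (L2 := L2) hp.2.2.2.1 hp.2.2.2.2,
        ← glue_V (L1 := M1) (L2 := M2) hq.2.2.2.1 hq.2.2.2.2, hval]
    subst hDeq
    subst hVeq
    have h1 : L1 = M1 := by
      rw [← glue_restrict_D L1 L2 hp.2.2.2.1, ← glue_restrict_D M1 M2 hq.2.2.2.1, hval]
    have h2 : L2 = M2 := by
      rw [← glue_restrict_V L1 L2 hp.2.2.2.1, ← glue_restrict_V M1 M2 hq.2.2.2.1, hval]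
    subst h1
    subst h2
    rfl
  · rintro ⟨L, hlin, hext⟩
    obtain ⟨hD, hV, hvV, hdisj, hcomp⟩ := forward_mem P u v huv h L hlin hext
    refine ⟨⟨⟨({x | L.lt x u}, {x | L.lt u x}), hD, hV, hvV, hdisj, hcomp⟩,
      ⟨restrict L {x | L.lt x u}, fun a b => hlin a.1 b.1,
        fun a b hab => hext a.1 b.1 (Or.inl hab)⟩,
      ⟨restrict L {x | L.lt u x}, fun a b => hlin a.1 b.1,
        fun a b hab => hext a.1 b.1 (Or.inl hab)⟩⟩, ?_⟩
    apply Subtype.ext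
    show glue (restrict L {x | L.lt x u}) (restrict L {x | L.lt u x}) hdisj = L
    exact glue_surj_eq L hlin u hdisj

end Glue

theorem main {U : Type*} [Fintype U] (P : PartialOrder U) (u v : U)
    (huv : u ≠ v) (h : ¬ P.le v u) :
    numExt (extend P u v h) =
      ∑ᶠ p ∈ DUSet P u v, numExt (restrict P p.1) * numExt (restrict P p.2) := by
  classical
  have hfinProp : Finite Prop := inferInstance
  have hfinSet : Finite (Set U) := Finite.of_equiv (U → Prop) (Equiv.refl _)
  have hfinSS : Finite {p : Set U × Set U // p ∈ DUSet P u v} := Subtype.finite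
  haveI : Fintype {p : Set U × Set U // p ∈ DUSet P u v} := Fintype.ofFinite _
  haveI : ∀ p : {p : Set U × Set U // p ∈ DUSet P u v},
      Fintype (ExtT (restrict P p.1.1) × ExtT (restrict P p.1.2)) :=
    fun p => Fintype.ofFinite _
  haveI : Fintype ↥(DUSet P u v) := Fintype.ofFinite _
  have hcard : numExt (extend P u v h) =
      Nat.card (Σ p : {p : Set U × Set U // p ∈ DUSet P u v},
        ExtT (restrict P p.1.1) × ExtT (restrict P p.1.2)) := by
    rw [numExt_eq_card]
    exact Nat.card_congr (Equiv.ofBijective (G P u v h) (G_bijective P u v huv h)).symm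
  have hsum : (∑ᶠ p ∈ DUSet P u v, numExt (restrict P p.1) * numExt (restrict P p.2)) =
      ∑ p : {p : Set U × Set U // p ∈ DUSet P u v},
        numExt (restrict P p.1.1) * numExt (restrict P p.1.2) := by
    rw [finsum_mem_eq_toFinset_sum _ (DUSet P u v)]
    rw [Finset.sum_subtype (DUSet P u v).toFinset
      (fun x => Set.mem_toFinset) (fun p => numExt (restrict P p.1) * numExt (restrict P p.2))]
  show numExt (extend P u v h) =
    ∑ᶠ p ∈ DUSet P u v, numExt (restrict P p.1) * numExt (restrict P p.2)
  rw [hsum, hcard, Nat.card_eq_fintype_card, Fintype.card_sigma]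
  refine Finset.sum_congr rfl fun p _ => ?_
  rw [← Nat.card_eq_fintype_card, Nat.card_prod, ← numExt_eq_card, ← numExt_eq_card]

end NumExtAux

/-- For distinct `u, v` in a finite poset `P` with `¬ (v ≼ u)`, the number of linear
extensions of `P[u→v]` equals the sum over all pairs `(D, V)` with `D` a down-set, `V` an
up-set, `v ∈ V`, `D ∩ V = ∅` and `U \\ (D ∪ V) = {u}`, of `e(P|D) · e(P|V)`. -/
theorem numExt_extend_eq_sum {U : Type*} [Fintype U] (P : PartialOrder U) (u v : U)
    (huv : u ≠ v) (h : ¬ P.le v u) :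
    numExt (extend P u v h) =
      ∑ᶠ p ∈ {p : Set U × Set U | isDownSet P p.1 ∧ isUpSet P p.2 ∧ v ∈ p.2 ∧
          p.1 ∩ p.2 = ∅ ∧ Set.univ \ (p.1 ∪ p.2) = {u}},
        numExt (restrict P p.1) * numExt (restrict P p.2) := by
  exact NumExtAux.main P u v huv h
end
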